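/- The integrals f_i pairwise commute with respect to the bracket {f,g}_Ω = −(∂f/∂Q)·EJ^{-1}(∂g/∂q) + (∂f/∂q)·EJ^{-1}(∂g/∂Q) modulo the constraint ideal: more precisely, the Dirac bracket {f_i, f_j}_Ω^D = {f_i,f_j}_Ω − ({φ_1,f_i}{φ_2,f_j} − {φ_2,f_i}{φ_1,f_j})/{φ_1,φ_2} vanishes at every point (q,Q) with ⟨q,q⟩ = ⟨Q,Q⟩ = c and ⟨q,J^{-1}Q⟩ ≠ 0. -/

import Mathlib

open Finset

/-- Partial derivative in the `q`-slot (first factor), direction `i`. -/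
noncomputable def pdq {n : ℕ} (f : (Fin n → ℝ) × (Fin n → ℝ) → ℝ)
    (i : Fin n) (x : (Fin n → ℝ) × (Fin n → ℝ)) : ℝ :=
  fderiv ℝ f x (Pi.single i 1, 0)

/-- Partial derivative in the `Q`-slot (second factor), direction `i`. -/
noncomputable def pdQ {n : ℕ} (f : (Fin n → ℝ) × (Fin n → ℝ) → ℝ)
    (i : Fin n) (x : (Fin n → ℝ) × (Fin n → ℝ)) : ℝ :=
  fderiv ℝ f x (0, Pi.single i 1)

/-- The Poisson bracket of the symplectic form Ω = ∑ τ_i J_i dQ_i ∧ dq_i. -/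
noncomputable def pbr {n : ℕ} (τ J : Fin n → ℝ)
    (f g : (Fin n → ℝ) × (Fin n → ℝ) → ℝ)
    (x : (Fin n → ℝ) × (Fin n → ℝ)) : ℝ :=
  - ∑ i, pdQ f i x * (τ i * (J i)⁻¹) * pdq g i x
  + ∑ i, pdq f i x * (τ i * (J i)⁻¹) * pdQ g i x

/-- The integrals f_i of the discrete Neumann system. -/
noncomputable def fint {n : ℕ} (τ J : Fin n → ℝ) (c : ℝ) (i : Fin n)
    (x : (Fin n → ℝ) × (Fin n → ℝ)) : ℝ :=
  c * τ i * (x.1 i)^2 +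
    ∑ j ∈ Finset.univ.erase i,
      τ i * τ j * (J j * x.2 j * x.1 i - x.1 j * J i * x.2 i)^2 / ((J i)^2 - (J j)^2)

/-- Auxiliary: the 2×2 minor `A i j = J j Q j q i - q j J i Q i`. -/
noncomputable def Aq {n : ℕ} (J : Fin n → ℝ) (x : (Fin n → ℝ) × (Fin n → ℝ))
    (i j : Fin n) : ℝ :=
  J j * x.2 j * x.1 i - x.1 j * J i * x.2 i

/-- Auxiliary: `d i j = J i ^ 2 - J j ^ 2`. -/
noncomputable def dd {n : ℕ} (J : Fin n → ℝ) (i j : Fin n) : ℝ :=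
  (J i)^2 - (J j)^2

variable {n : ℕ}

lemma Aq_self (J : Fin n → ℝ) (x : (Fin n → ℝ) × (Fin n → ℝ)) (i : Fin n) :
    Aq J x i i = 0 := by unfold Aq; ring

lemma Aq_div_dd_symm (J : Fin n → ℝ) (x : (Fin n → ℝ) × (Fin n → ℝ)) (i j : Fin n) :
    Aq J x j i / dd J j i = Aq J x i j / dd J i j := by
  have h1 : Aq J x j i = -(Aq J x i j) := by unfold Aq; ring
  have h2 : dd J j i = -(dd J i j) := by unfold dd; ring
  rw [h1, h2, neg_div_neg_eq]

lemma fderiv_fint_apply (τ J : Fin n → ℝ) (c : ℝ) (i : Fin n)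
    (x : (Fin n → ℝ) × (Fin n → ℝ)) (w1 w2 : Fin n → ℝ) :
    fderiv ℝ (fint τ J c i) x (w1, w2) =
      c * τ i * (2 * x.1 i * w1 i) +
      ∑ j ∈ Finset.univ.erase i,
        τ i * τ j / ((J i)^2 - (J j)^2) *
          (2 * (J j * x.2 j * x.1 i - x.1 j * J i * x.2 i) *
            (J j * w2 j * x.1 i + J j * x.2 j * w1 i -
              (w1 j * J i * x.2 i + x.1 j * J i * w2 i))) := by
  have hu : ∀ m : Fin n, HasFDerivAt (fun y : (Fin n → ℝ) × (Fin n → ℝ) => y.1 m)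
      ((ContinuousLinearMap.proj m).comp (ContinuousLinearMap.fst ℝ (Fin n → ℝ) (Fin n → ℝ))) x :=
    fun m => ((ContinuousLinearMap.proj m).comp
      (ContinuousLinearMap.fst ℝ (Fin n → ℝ) (Fin n → ℝ))).hasFDerivAt
  have hv : ∀ m : Fin n, HasFDerivAt (fun y : (Fin n → ℝ) × (Fin n → ℝ) => y.2 m)
      ((ContinuousLinearMap.proj m).comp (ContinuousLinearMap.snd ℝ (Fin n → ℝ) (Fin n → ℝ))) x :=
    fun m => ((ContinuousLinearMap.proj m).comp
      (ContinuousLinearMap.snd ℝ (Fin n → ℝ) (Fin n → ℝ))).hasFDerivAt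
  have e : fint τ J c i = fun y : (Fin n → ℝ) × (Fin n → ℝ) =>
      (c * τ i) * (y.1 i * y.1 i) +
      ∑ j ∈ Finset.univ.erase i,
        (τ i * τ j / ((J i)^2 - (J j)^2)) *
          ((J j * y.2 j * y.1 i - y.1 j * J i * y.2 i) *
           (J j * y.2 j * y.1 i - y.1 j * J i * y.2 i)) := by
    funext y
    unfold fint
    congr 1
    · ring
    · exact Finset.sum_congr rfl fun j _ => by ring
  rw [e]
  have hA : ∀ j : Fin n, HasFDerivAt
      (fun y : (Fin n → ℝ) × (Fin n → ℝ) => J j * y.2 j * y.1 i - y.1 j * J i * y.2 i)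
      (_) x := fun j =>
    (((hv j).const_mul (J j)).fun_mul (hu i)).fun_sub (((hu j).mul_const (J i)).fun_mul (hv i))
  have H := ((((hu i).fun_mul (hu i)).const_mul (c * τ i)).fun_add
    (HasFDerivAt.fun_sum (u := Finset.univ.erase i) fun j _ =>
      (((hA j).fun_mul (hA j)).const_mul (τ i * τ j / ((J i)^2 - (J j)^2)))))
  rw [H.fderiv]
  simp only [ContinuousLinearMap.add_apply, ContinuousLinearMap.coe_smul', Pi.smul_apply,
    ContinuousLinearMap.sum_apply, ContinuousLinearMap.coe_comp', Function.comp_apply,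
    ContinuousLinearMap.proj_apply, ContinuousLinearMap.coe_fst', ContinuousLinearMap.coe_snd',
    ContinuousLinearMap.coe_sub', Pi.sub_apply, smul_eq_mul]
  congr 1
  · ring
  · exact Finset.sum_congr rfl fun j _ => by ring

lemma pdq_fint_self (τ J : Fin n → ℝ) (c : ℝ) (i : Fin n)
    (x : (Fin n → ℝ) × (Fin n → ℝ)) :
    pdq (fint τ J c i) i x =
      c * τ i * (2 * x.1 i) +
      ∑ j ∈ Finset.univ.erase i,
        τ i * τ j / dd J i j * (2 * Aq J x i j * (J j * x.2 j)) := by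
  unfold pdq
  rw [fderiv_fint_apply]
  congr 1
  · simp
  · refine Finset.sum_congr rfl fun j hj => ?_
    rw [Pi.single_eq_same, Pi.single_eq_of_ne (Finset.ne_of_mem_erase hj)]
    unfold Aq dd
    simp only [Pi.zero_apply, mul_zero, zero_mul, add_zero, zero_add, mul_one, one_mul,
      sub_zero, zero_sub]

lemma pdq_fint_ne (τ J : Fin n → ℝ) (c : ℝ) (i k : Fin n) (hk : k ≠ i)
    (x : (Fin n → ℝ) × (Fin n → ℝ)) :
    pdq (fint τ J c i) k x =
      τ i * τ k / dd J i k * (2 * Aq J x i k * (-(J i * x.2 i))) := by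
  unfold pdq
  rw [fderiv_fint_apply]
  rw [Finset.sum_eq_single_of_mem k (Finset.mem_erase.2 ⟨hk, Finset.mem_univ k⟩)
    (fun j _ hjk => by
      rw [Pi.single_eq_of_ne hjk, Pi.single_eq_of_ne (Ne.symm hk)]
      simp)]
  rw [Pi.single_eq_same, Pi.single_eq_of_ne (Ne.symm hk)]
  unfold Aq dd
  simp only [Pi.zero_apply, mul_zero, zero_mul, add_zero, zero_add, mul_one, one_mul,
    sub_zero, zero_sub]
  try ring

lemma pdQ_fint_self (τ J : Fin n → ℝ) (c : ℝ) (i : Fin n)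
    (x : (Fin n → ℝ) × (Fin n → ℝ)) :
    pdQ (fint τ J c i) i x =
      ∑ j ∈ Finset.univ.erase i,
        τ i * τ j / dd J i j * (2 * Aq J x i j * (-(x.1 j * J i))) := by
  unfold pdQ
  rw [fderiv_fint_apply]
  rw [show c * τ i * (2 * x.1 i * (0 : Fin n → ℝ) i) = 0 by simp]
  rw [zero_add]
  refine Finset.sum_congr rfl fun j hj => ?_
  rw [Pi.single_eq_same, Pi.single_eq_of_ne (Finset.ne_of_mem_erase hj)]
  unfold Aq dd
  simp only [Pi.zero_apply, mul_zero, zero_mul, add_zero, zero_add, mul_one, one_mul,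
    sub_zero, zero_sub]
  try ring

lemma pdQ_fint_ne (τ J : Fin n → ℝ) (c : ℝ) (i k : Fin n) (hk : k ≠ i)
    (x : (Fin n → ℝ) × (Fin n → ℝ)) :
    pdQ (fint τ J c i) k x =
      τ i * τ k / dd J i k * (2 * Aq J x i k * (J k * x.1 i)) := by
  unfold pdQ
  rw [fderiv_fint_apply]
  rw [show c * τ i * (2 * x.1 i * (0 : Fin n → ℝ) i) = 0 by simp]
  rw [zero_add]
  rw [Finset.sum_eq_single_of_mem k (Finset.mem_erase.2 ⟨hk, Finset.mem_univ k⟩)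
    (fun j _ hjk => by
      rw [Pi.single_eq_of_ne hjk, Pi.single_eq_of_ne (Ne.symm hk)]
      simp)]
  rw [Pi.single_eq_same, Pi.single_eq_of_ne (Ne.symm hk)]
  unfold Aq dd
  simp only [Pi.zero_apply, mul_zero, zero_mul, add_zero, zero_add, mul_one, one_mul,
    sub_zero, zero_sub]
  try ring

lemma pd_sq1 (τ : Fin n → ℝ) (k : Fin n) (x : (Fin n → ℝ) × (Fin n → ℝ)) :
    pdq (fun y : (Fin n → ℝ) × (Fin n → ℝ) => ∑ m, τ m * y.1 m * y.1 m) k x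
      = 2 * τ k * x.1 k ∧
    pdQ (fun y : (Fin n → ℝ) × (Fin n → ℝ) => ∑ m, τ m * y.1 m * y.1 m) k x = 0 := by
  have hu : ∀ m : Fin n, HasFDerivAt (fun y : (Fin n → ℝ) × (Fin n → ℝ) => y.1 m)
      ((ContinuousLinearMap.proj m).comp (ContinuousLinearMap.fst ℝ (Fin n → ℝ) (Fin n → ℝ))) x :=
    fun m => ((ContinuousLinearMap.proj m).comp
      (ContinuousLinearMap.fst ℝ (Fin n → ℝ) (Fin n → ℝ))).hasFDerivAt
  have H := HasFDerivAt.fun_sum (u := (Finset.univ : Finset (Fin n)))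
    (fun m _ => ((hu m).const_mul (τ m)).fun_mul (hu m))
  constructor
  · unfold pdq
    rw [H.fderiv]
    simp only [ContinuousLinearMap.sum_apply, ContinuousLinearMap.add_apply,
      ContinuousLinearMap.coe_smul', Pi.smul_apply, ContinuousLinearMap.coe_comp',
      Function.comp_apply, ContinuousLinearMap.proj_apply, ContinuousLinearMap.coe_fst',
      smul_eq_mul]
    rw [Finset.sum_eq_single_of_mem k (Finset.mem_univ k)
      (fun m _ hmk => by rw [Pi.single_eq_of_ne hmk]; ring)]
    rw [Pi.single_eq_same]
    ring
  · unfold pdQ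
    rw [H.fderiv]
    simp only [ContinuousLinearMap.sum_apply, ContinuousLinearMap.add_apply,
      ContinuousLinearMap.coe_smul', Pi.smul_apply, ContinuousLinearMap.coe_comp',
      Function.comp_apply, ContinuousLinearMap.proj_apply, ContinuousLinearMap.coe_fst',
      smul_eq_mul]
    simp

lemma pbr_phi1_fint (τ J : Fin n → ℝ) (hτ : ∀ i, τ i = 1 ∨ τ i = -1)
    (hJ0 : ∀ i, J i ≠ 0) (hJ : ∀ i j, i ≠ j → (J i)^2 ≠ (J j)^2) (c : ℝ) (i : Fin n) (x : (Fin n → ℝ) × (Fin n → ℝ)) :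
    pbr τ J (fun y : (Fin n → ℝ) × (Fin n → ℝ) => ∑ m, τ m * y.1 m * y.1 m)
      (fint τ J c i) x = 0 := by
  unfold pbr
  have hA : (∑ k, pdQ (fun y : (Fin n → ℝ) × (Fin n → ℝ) => ∑ m, τ m * y.1 m * y.1 m) k x *
      (τ k * (J k)⁻¹) * pdq (fint τ J c i) k x) = 0 :=
    Finset.sum_eq_zero fun k _ => by rw [(pd_sq1 τ k x).2]; ring
  have hB : (∑ k, pdq (fun y : (Fin n → ℝ) × (Fin n → ℝ) => ∑ m, τ m * y.1 m * y.1 m) k x *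
      (τ k * (J k)⁻¹) * pdQ (fint τ J c i) k x) = 0 := by
    have e2 : ∀ k ∈ Finset.univ (α := Fin n),
        pdq (fun y : (Fin n → ℝ) × (Fin n → ℝ) => ∑ m, τ m * y.1 m * y.1 m) k x *
          (τ k * (J k)⁻¹) * pdQ (fint τ J c i) k x
        = 2 * τ k * x.1 k * (τ k * (J k)⁻¹) * pdQ (fint τ J c i) k x :=
      fun k _ => by rw [(pd_sq1 τ k x).1]
    rw [Finset.sum_congr rfl e2]
    rw [← Finset.add_sum_erase _ _ (Finset.mem_univ i)]
    rw [pdQ_fint_self τ J c i x, Finset.mul_sum]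
    have e3 : ∀ k ∈ Finset.univ.erase i,
        2 * τ k * x.1 k * (τ k * (J k)⁻¹) * pdQ (fint τ J c i) k x
        = 2 * τ k * x.1 k * (τ k * (J k)⁻¹) *
            (τ i * τ k / dd J i k * (2 * Aq J x i k * (J k * x.1 i))) :=
      fun k hk => by rw [pdQ_fint_ne τ J c i k (Finset.ne_of_mem_erase hk) x]
    rw [Finset.sum_congr rfl e3, ← Finset.sum_add_distrib]
    refine Finset.sum_eq_zero fun l hl => ?_
    have hli : l ≠ i := Finset.ne_of_mem_erase hl
    have hd : dd J i l ≠ 0 := by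
      unfold dd; exact sub_ne_zero_of_ne (hJ i l hli.symm)
    rcases hτ i with h1 | h1 <;> rcases hτ l with h2 | h2 <;>
      rw [h1, h2] <;> field_simp [hJ0 i, hJ0 l, hd] <;> ring
  rw [hA, hB]
  ring

lemma hdiag (τ J : Fin n → ℝ) (hτ : ∀ i, τ i = 1 ∨ τ i = -1)
    (hJ0 : ∀ i, J i ≠ 0) (hJ : ∀ i j, i ≠ j → (J i)^2 ≠ (J j)^2)
    (c : ℝ) (x : (Fin n → ℝ) × (Fin n → ℝ)) (i j : Fin n) (hij : i ≠ j) :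
    -(pdQ (fint τ J c i) i x * (τ i * (J i)⁻¹) * pdq (fint τ J c j) i x)
      + pdq (fint τ J c i) i x * (τ i * (J i)⁻¹) * pdQ (fint τ J c j) i x
    = 4 * (τ i * τ j) * (Aq J x i j / dd J i j) * (c * (x.1 i * x.1 j))
      + ∑ l ∈ Finset.univ.erase i,
          4 * (τ i * τ j) * (Aq J x i j / dd J i j) *
            (τ l * (Aq J x i l * Aq J x j l) / dd J i l) := by
  have hdij : dd J i j ≠ 0 := by unfold dd; exact sub_ne_zero_of_ne (hJ i j hij)
  rw [pdQ_fint_self τ J c i x, pdq_fint_self τ J c i x,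
      pdq_fint_ne τ J c j i hij x, pdQ_fint_ne τ J c j i hij x]
  simp only [Finset.sum_mul, add_mul]
  rw [show ∀ u v g : ℝ, -u + (g + v) = g + (v - u) from fun u v g => by ring]
  rw [← Finset.sum_sub_distrib]
  congr 1
  · rw [show Aq J x j i = -(Aq J x i j) from by unfold Aq; ring,
       show dd J j i = -(dd J i j) from by unfold dd; ring]
    rcases hτ i with h1 | h1 <;> rw [h1] <;> field_simp [hJ0 i, hdij] <;> ring
  · refine Finset.sum_congr rfl fun l hl => ?_
    have hli : l ≠ i := Finset.ne_of_mem_erase hl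
    have hdil : dd J i l ≠ 0 := by unfold dd; exact sub_ne_zero_of_ne (hJ i l hli.symm)
    rw [show Aq J x j i = -(Aq J x i j) from by unfold Aq; ring,
       show dd J j i = -(dd J i j) from by unfold dd; ring]
    rcases hτ i with h1 | h1 <;> rw [h1] <;>
      field_simp [hJ0 i, hdij, hdil] <;> unfold Aq <;> ring

lemma hoff (τ J : Fin n → ℝ) (hτ : ∀ i, τ i = 1 ∨ τ i = -1)
    (hJ0 : ∀ i, J i ≠ 0) (hJ : ∀ i j, i ≠ j → (J i)^2 ≠ (J j)^2)
    (c : ℝ) (x : (Fin n → ℝ) × (Fin n → ℝ)) (i j k : Fin n)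
    (hik : k ≠ i) (hjk : k ≠ j) :
    -(pdQ (fint τ J c i) k x * (τ k * (J k)⁻¹) * pdq (fint τ J c j) k x)
      + pdq (fint τ J c i) k x * (τ k * (J k)⁻¹) * pdQ (fint τ J c j) k x
    = 4 * (τ i * τ j) * τ k *
        (Aq J x i k * Aq J x j k * Aq J x i j) / (dd J i k * dd J j k) := by
  have hdik : dd J i k ≠ 0 := by unfold dd; exact sub_ne_zero_of_ne (hJ i k hik.symm)
  have hdjk : dd J j k ≠ 0 := by unfold dd; exact sub_ne_zero_of_ne (hJ j k hjk.symm)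
  rw [pdQ_fint_ne τ J c i k hik x, pdq_fint_ne τ J c i k hik x,
      pdq_fint_ne τ J c j k hjk x, pdQ_fint_ne τ J c j k hjk x]
  rcases hτ k with h1 | h1 <;> rw [h1] <;>
    field_simp [hJ0 k, hdik, hdjk] <;> unfold Aq <;> ring

lemma pbr_fint_fint (τ J : Fin n → ℝ) (hτ : ∀ i, τ i = 1 ∨ τ i = -1)
    (hJ0 : ∀ i, J i ≠ 0) (hJ : ∀ i j, i ≠ j → (J i)^2 ≠ (J j)^2)
    (c : ℝ) (x : (Fin n → ℝ) × (Fin n → ℝ)) (i j : Fin n) :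
    pbr τ J (fint τ J c i) (fint τ J c j) x = 0 := by
  rcases eq_or_ne i j with rfl | hij
  · unfold pbr
    have e : (∑ k, pdq (fint τ J c i) k x * (τ k * (J k)⁻¹) * pdQ (fint τ J c i) k x)
        = ∑ k, pdQ (fint τ J c i) k x * (τ k * (J k)⁻¹) * pdq (fint τ J c i) k x :=
      Finset.sum_congr rfl fun k _ => by ring
    rw [e]
    exact neg_add_cancel _
  · have hjmem : j ∈ Finset.univ.erase i :=
      Finset.mem_erase.2 ⟨hij.symm, Finset.mem_univ j⟩
    have hjnot : j ∉ (Finset.univ.erase i).erase j := Finset.notMem_erase j _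
    have hinot : i ∉ Finset.univ.erase i := Finset.notMem_erase i _
    have split3 : ∀ f : Fin n → ℝ,
        ∑ k, f k = f i + (f j + ∑ k ∈ (Finset.univ.erase i).erase j, f k) := by
      intro f
      rw [Finset.add_sum_erase _ f hjmem, Finset.add_sum_erase _ f (Finset.mem_univ i)]
    unfold pbr
    rw [split3 (fun k => pdQ (fint τ J c i) k x * (τ k * (J k)⁻¹) * pdq (fint τ J c j) k x),
        split3 (fun k => pdq (fint τ J c i) k x * (τ k * (J k)⁻¹) * pdQ (fint τ J c j) k x)]
    have Hi := hdiag τ J hτ hJ0 hJ c x i j hij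
    have Hj := hdiag τ J hτ hJ0 hJ c x j i hij.symm
    -- split the sums over erase at j (resp. i) and kill the vanishing term
    rw [← Finset.add_sum_erase _ _ hjmem] at Hi
    have himem : i ∈ Finset.univ.erase j :=
      Finset.mem_erase.2 ⟨hij, Finset.mem_univ i⟩
    rw [← Finset.add_sum_erase _ _ himem] at Hj
    simp only [Aq_self, mul_zero, zero_mul, zero_div, add_zero, zero_add] at Hi Hj
    rw [Finset.erase_right_comm] at Hj
    -- the off-diagonal sum
    have HS : (∑ k ∈ (Finset.univ.erase i).erase j,
          pdq (fint τ J c i) k x * (τ k * (J k)⁻¹) * pdQ (fint τ J c j) k x)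
        - (∑ k ∈ (Finset.univ.erase i).erase j,
          pdQ (fint τ J c i) k x * (τ k * (J k)⁻¹) * pdq (fint τ J c j) k x)
        = ∑ k ∈ (Finset.univ.erase i).erase j,
            4 * (τ i * τ j) * τ k *
              (Aq J x i k * Aq J x j k * Aq J x i j) / (dd J i k * dd J j k) := by
      rw [← Finset.sum_sub_distrib]
      refine Finset.sum_congr rfl fun k hk => ?_
      have hkj : k ≠ j := Finset.ne_of_mem_erase hk
      have hki : k ≠ i := Finset.ne_of_mem_erase (Finset.mem_of_mem_erase hk)
      have h := hoff τ J hτ hJ0 hJ c x i j k hki hkj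
      linarith [h]
    -- the key partial-fraction cancellation
    have key : (∑ l ∈ (Finset.univ.erase i).erase j,
          4 * (τ i * τ j) * (Aq J x i j / dd J i j) *
            (τ l * (Aq J x i l * Aq J x j l) / dd J i l))
        - (∑ l ∈ (Finset.univ.erase i).erase j,
          4 * (τ j * τ i) * (Aq J x j i / dd J j i) *
            (τ l * (Aq J x j l * Aq J x i l) / dd J j l))
        + (∑ k ∈ (Finset.univ.erase i).erase j,
            4 * (τ i * τ j) * τ k *
              (Aq J x i k * Aq J x j k * Aq J x i j) / (dd J i k * dd J j k)) = 0 := by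
      rw [← Finset.sum_sub_distrib, ← Finset.sum_add_distrib]
      refine Finset.sum_eq_zero fun k hk => ?_
      have hkj : k ≠ j := Finset.ne_of_mem_erase hk
      have hki : k ≠ i := Finset.ne_of_mem_erase (Finset.mem_of_mem_erase hk)
      have hdij : dd J i j ≠ 0 := by unfold dd; exact sub_ne_zero_of_ne (hJ i j hij)
      have hdik : dd J i k ≠ 0 := by unfold dd; exact sub_ne_zero_of_ne (hJ i k hki.symm)
      have hdjk : dd J j k ≠ 0 := by unfold dd; exact sub_ne_zero_of_ne (hJ j k hkj.symm)
      rw [show Aq J x j i = -(Aq J x i j) from by unfold Aq; ring,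
          show dd J j i = -(dd J i j) from by unfold dd; ring]
      have hrel : dd J i j = dd J i k - dd J j k := by unfold dd; ring
      rw [hrel] at hdij ⊢
      have h5 : -(dd J i k * dd J j k) + dd J j k ^ 2 ≠ 0 := by
        rw [show -(dd J i k * dd J j k) + dd J j k ^ 2
            = dd J j k * -(dd J i k - dd J j k) from by ring]
        exact mul_ne_zero hdjk (neg_ne_zero.2 hdij)
      have h6 : (-(dd J i k * dd J j k) + dd J j k ^ 2) *
          (-(dd J i k * dd J j k) + dd J j k ^ 2)⁻¹ = 1 := mul_inv_cancel₀ h5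
      field_simp [hdij, hdik, hdjk]
      ring
    -- the two "c" terms agree
    have hC : 4 * (τ j * τ i) * (Aq J x j i / dd J j i) * (c * (x.1 j * x.1 i))
        = 4 * (τ i * τ j) * (Aq J x i j / dd J i j) * (c * (x.1 i * x.1 j)) := by
      rw [show Aq J x j i = -(Aq J x i j) from by unfold Aq; ring,
          show dd J j i = -(dd J i j) from by unfold dd; ring, neg_div_neg_eq]
      ring
    linear_combination Hi - Hj + HS + key - hC


theorem stmt12 (n : ℕ) (τ J : Fin n → ℝ)
    (hτ : ∀ i, τ i = 1 ∨ τ i = -1) (hJ0 : ∀ i, J i ≠ 0)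
    (hJ : ∀ i j, i ≠ j → (J i)^2 ≠ (J j)^2)
    (c : ℝ)
    (φ₁ φ₂ : (Fin n → ℝ) × (Fin n → ℝ) → ℝ)
    (hφ₁ : ∀ x, φ₁ x = ∑ i, τ i * x.1 i * x.1 i)
    (hφ₂ : ∀ x, φ₂ x = ∑ i, τ i * x.2 i * x.2 i)
    (x : (Fin n → ℝ) × (Fin n → ℝ))
    (hx1 : φ₁ x = c) (hx2 : φ₂ x = c)
    (hK : ∑ i, τ i * x.1 i * ((J i)⁻¹ * x.2 i) ≠ 0) :
    ∀ i j,
      pbr τ J (fint τ J c i) (fint τ J c j) x -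
        (pbr τ J φ₁ (fint τ J c i) x * pbr τ J φ₂ (fint τ J c j) x -
         pbr τ J φ₂ (fint τ J c i) x * pbr τ J φ₁ (fint τ J c j) x) /
          pbr τ J φ₁ φ₂ x = 0 := by
  intro i j
  have e1 : φ₁ = fun y : (Fin n → ℝ) × (Fin n → ℝ) => ∑ m, τ m * y.1 m * y.1 m := funext hφ₁
  rw [pbr_fint_fint τ J hτ hJ0 hJ c x i j, e1,
    pbr_phi1_fint τ J hτ hJ0 hJ c i x, pbr_phi1_fint τ J hτ hJ0 hJ c j x]
  simp
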